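/- arXiv:2510.14864 — 7 statements merged into one kernel-verified Lean document; each statement's English description precedes it below -/
import Mathlib

section
/- Synergistic phenomenon (instance of Observation 1): for the XOR system, the sum over i of the mutual information between X_i and the joint of the remaining two variables strictly exceeds the joint entropy of the system: I(X1 ; (X2, X3)) + I(X2 ; (X1, X3)) + I(X3 ; (X1, X2)) = 3·Real.log 2 > 2·Real.log 2 = H((X1, X2, X3)). -/
open MeasureTheory ProbabilityTheory

/-- Shannon entropy (natural logarithm) of a finite-range random variable `X`,
computed from the probabilities of its values. -/
noncomputable def entropy {Ω : Type*} [MeasurableSpace Ω] {α : Type*}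
    (μ : Measure Ω) (X : Ω → α) : ℝ :=
  ∑' a : α, Real.negMulLog (μ (X ⁻¹' {a})).toReal

/-- Conditional entropy `H(X | Y)`. -/
noncomputable def condEntropy {Ω : Type*} [MeasurableSpace Ω] {α β : Type*}
    (μ : Measure Ω) (X : Ω → α) (Y : Ω → β) : ℝ :=
  entropy μ (fun ω => (X ω, Y ω)) - entropy μ Y

/-- Mutual information `I(X ; Y)`. -/
noncomputable def mutualInfo {Ω : Type*} [MeasurableSpace Ω] {α β : Type*}
    (μ : Measure Ω) (X : Ω → α) (Y : Ω → β) : ℝ :=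
  entropy μ X + entropy μ Y - entropy μ (fun ω => (X ω, Y ω))

open scoped ENNReal

lemma sum_zmod2' (f : ZMod 2 → ℝ) : ∑ a, f a = f 0 + f 1 := by
  rw [show (Finset.univ : Finset (ZMod 2)) = {0, 1} by decide,
    Finset.sum_insert (by decide), Finset.sum_singleton]

lemma entropy_fintype' {Ω : Type*} [MeasurableSpace Ω] {α : Type*} [Fintype α]
    (μ : Measure Ω) (X : Ω → α) :
    entropy μ X = ∑ a, Real.negMulLog (μ (X ⁻¹' {a})).toReal := tsum_fintype _

lemma nml_quarter' : Real.negMulLog ((1/4 : ℝ≥0∞)).toReal = (1/2) * Real.log 2 := by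
  have h : ((1/4 : ℝ≥0∞)).toReal = 1/4 := by norm_num
  rw [h, Real.negMulLog, show (1/4:ℝ) = (2:ℝ)^(-2 : ℤ) by norm_num, Real.log_zpow]
  push_cast; ring

lemma nml_half' : Real.negMulLog ((1/2 : ℝ≥0∞)).toReal = (1/2) * Real.log 2 := by
  have h : ((1/2 : ℝ≥0∞)).toReal = 1/2 := by norm_num
  rw [h, Real.negMulLog, show (1/2:ℝ) = (2:ℝ)^(-1 : ℤ) by norm_num, Real.log_zpow]
  push_cast; ring

/-- **Synergistic phenomenon (Observation 1, XOR instance).** For the XOR system,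
the sum over `i` of the mutual information between `X i` and the joint of the
remaining two variables strictly exceeds the joint entropy of the system:
`I(X1;(X2,X3)) + I(X2;(X1,X3)) + I(X3;(X1,X2)) = 3 log 2 > 2 log 2 = H((X1,X2,X3))`. -/
theorem xor_synergistic_phenomenon
    {Ω : Type*} [MeasurableSpace Ω] (μ : Measure Ω) [IsProbabilityMeasure μ]
    (X : Fin 3 → Ω → ZMod 2) (hmeas : ∀ i, Measurable (X i))
    (hindep : IndepFun (X 0) (X 1) μ)
    (hunif0 : ∀ a : ZMod 2, μ (X 0 ⁻¹' {a}) = 1/2)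
    (hunif1 : ∀ a : ZMod 2, μ (X 1 ⁻¹' {a}) = 1/2)
    (hX2 : X 2 = fun ω => X 0 ω + X 1 ω) :
    mutualInfo μ (X 0) (fun ω => (X 1 ω, X 2 ω))
      + mutualInfo μ (X 1) (fun ω => (X 0 ω, X 2 ω))
      + mutualInfo μ (X 2) (fun ω => (X 0 ω, X 1 ω)) = 3 * Real.log 2
    ∧ 3 * Real.log 2 > 2 * Real.log 2
    ∧ 2 * Real.log 2 = entropy μ (fun ω => (X 0 ω, X 1 ω, X 2 ω)) := by
  -- joint probabilities of (X 0, X 1)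
  have hAB : ∀ a b : ZMod 2, μ (X 0 ⁻¹' {a} ∩ X 1 ⁻¹' {b}) = 1/4 := by
    intro a b
    rw [hindep.measure_inter_preimage_eq_mul _ _ (measurableSet_singleton a)
      (measurableSet_singleton b), hunif0, hunif1]
    rw [show (1:ℝ≥0∞)/2 = 2⁻¹ by norm_num, ← ENNReal.mul_inv (by norm_num) (by norm_num)]
    norm_num
  -- probability of the basic event {X0 = a, X1 = b, X2 = c}
  have hm : ∀ a b c : ZMod 2, μ {ω | X 0 ω = a ∧ X 1 ω = b ∧ X 2 ω = c}
      = if c = a + b then 1/4 else 0 := by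
    intro a b c
    by_cases h : c = a + b
    · rw [if_pos h, ← hAB a b]
      congr 1
      subst h
      ext ω
      simp only [Set.mem_setOf_eq, Set.mem_inter_iff, Set.mem_preimage,
        Set.mem_singleton_iff, hX2]
      exact (by decide : ∀ u v a b : ZMod 2,
        (u = a ∧ v = b ∧ u + v = a + b) ↔ (u = a ∧ v = b)) _ _ _ _
    · rw [if_neg h]
      have : {ω | X 0 ω = a ∧ X 1 ω = b ∧ X 2 ω = c} = ∅ := by
        ext ω
        simp only [Set.mem_setOf_eq, Set.mem_empty_iff_false, iff_false, not_and, hX2]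
        intro h1 h2 h3
        exact h (by rw [← h1, ← h2, ← h3])
      rw [this, measure_empty]
  -- single-variable distributions
  have hunif2 : ∀ c : ZMod 2, μ (X 2 ⁻¹' {c}) = 1/2 := by
    intro c
    have hset : X 2 ⁻¹' {c} = (X 0 ⁻¹' {c} ∩ X 1 ⁻¹' {0}) ∪ (X 0 ⁻¹' {c+1} ∩ X 1 ⁻¹' {1}) := by
      ext ω
      simp only [Set.mem_preimage, Set.mem_singleton_iff, Set.mem_union, Set.mem_inter_iff, hX2]
      exact (by decide : ∀ u v c : ZMod 2,
        (u + v = c) ↔ ((u = c ∧ v = 0) ∨ (u = c + 1 ∧ v = 1))) _ _ _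
    have hdisj : Disjoint (X 0 ⁻¹' {c} ∩ X 1 ⁻¹' {0}) (X 0 ⁻¹' {c+1} ∩ X 1 ⁻¹' {1}) := by
      apply Set.disjoint_left.mpr
      rintro ω ⟨-, h0⟩ ⟨-, h1⟩
      simp only [Set.mem_preimage, Set.mem_singleton_iff] at h0 h1
      exact (by decide : (0 : ZMod 2) ≠ 1) (h0 ▸ h1)
    rw [hset, measure_union hdisj
      (((hmeas 0) (measurableSet_singleton _)).inter ((hmeas 1) (measurableSet_singleton _))),
      hAB, hAB]
    rw [show (1:ℝ≥0∞)/4 = 2⁻¹*2⁻¹ from by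
        rw [← ENNReal.mul_inv (by norm_num) (by norm_num)]; norm_num,
      ← add_mul, ENNReal.inv_two_add_inv_two, one_mul]
    norm_num
  -- entropies of single variables
  have e0 : entropy μ (X 0) = Real.log 2 := by
    rw [entropy_fintype', sum_zmod2', hunif0, hunif0, nml_half']; ring
  have e1 : entropy μ (X 1) = Real.log 2 := by
    rw [entropy_fintype', sum_zmod2', hunif1, hunif1, nml_half']; ring
  have e2 : entropy μ (X 2) = Real.log 2 := by
    rw [entropy_fintype', sum_zmod2', hunif2, hunif2, nml_half']; ring
  -- entropies of pairs : all 2 log 2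
  have e12 : entropy μ (fun ω => (X 1 ω, X 2 ω)) = 2 * Real.log 2 := by
    have hp : ∀ b c : ZMod 2, μ ((fun ω => (X 1 ω, X 2 ω)) ⁻¹' {(b,c)}) = 1/4 := by
      intro b c
      rw [← hAB (c+b) b]
      congr 1
      ext ω
      simp only [Set.mem_preimage, Set.mem_singleton_iff, Prod.mk.injEq, Set.mem_inter_iff, hX2]
      exact (by decide : ∀ u v b c : ZMod 2,
        (v = b ∧ u + v = c) ↔ (u = c + b ∧ v = b)) _ _ _ _
    rw [entropy_fintype', Fintype.sum_prod_type]
    rw [sum_zmod2']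
    simp only [sum_zmod2', hp, nml_quarter']
    ring
  have e02 : entropy μ (fun ω => (X 0 ω, X 2 ω)) = 2 * Real.log 2 := by
    have hp : ∀ a c : ZMod 2, μ ((fun ω => (X 0 ω, X 2 ω)) ⁻¹' {(a,c)}) = 1/4 := by
      intro a c
      rw [← hAB a (c+a)]
      congr 1
      ext ω
      simp only [Set.mem_preimage, Set.mem_singleton_iff, Prod.mk.injEq, Set.mem_inter_iff, hX2]
      exact (by decide : ∀ u v a c : ZMod 2,
        (u = a ∧ u + v = c) ↔ (u = a ∧ v = c + a)) _ _ _ _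
    rw [entropy_fintype', Fintype.sum_prod_type]
    rw [sum_zmod2']
    simp only [sum_zmod2', hp, nml_quarter']
    ring
  have e01 : entropy μ (fun ω => (X 0 ω, X 1 ω)) = 2 * Real.log 2 := by
    have hp : ∀ a b : ZMod 2, μ ((fun ω => (X 0 ω, X 1 ω)) ⁻¹' {(a,b)}) = 1/4 := by
      intro a b
      rw [← hAB a b]
      congr 1
      ext ω
      simp only [Set.mem_preimage, Set.mem_singleton_iff, Prod.mk.injEq, Set.mem_inter_iff]
    rw [entropy_fintype', Fintype.sum_prod_type]
    rw [sum_zmod2']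
    simp only [sum_zmod2', hp, nml_quarter']
    ring
  -- entropies of the three triples : all 2 log 2
  have e012 : entropy μ (fun ω => (X 0 ω, X 1 ω, X 2 ω)) = 2 * Real.log 2 := by
    have hp : ∀ a b c : ZMod 2, μ ((fun ω => (X 0 ω, X 1 ω, X 2 ω)) ⁻¹' {(a,b,c)})
        = if c = a + b then 1/4 else 0 := by
      intro a b c
      rw [← hm a b c]
      congr 1
      ext ω
      simp only [Set.mem_preimage, Set.mem_singleton_iff, Prod.mk.injEq, Set.mem_setOf_eq]
    rw [entropy_fintype']
    simp only [Fintype.sum_prod_type]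
    rw [sum_zmod2']
    simp only [sum_zmod2', hp, show ((0:ZMod 2)+0) = 0 from rfl,
      show ((0:ZMod 2)+1) = 1 from rfl, show ((1:ZMod 2)+0) = 1 from rfl,
      show ((1:ZMod 2)+1) = 0 from by decide, (by decide : (0:ZMod 2) ≠ 1),
      (by decide : (1:ZMod 2) ≠ 0), if_true, if_false, ite_true, ite_false, reduceIte,
      ENNReal.toReal_zero, Real.negMulLog_zero, nml_quarter']
    ring
  have e102 : entropy μ (fun ω => (X 1 ω, X 0 ω, X 2 ω)) = 2 * Real.log 2 := by
    have hp : ∀ b a c : ZMod 2, μ ((fun ω => (X 1 ω, X 0 ω, X 2 ω)) ⁻¹' {(b,a,c)})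
        = if c = a + b then 1/4 else 0 := by
      intro b a c
      rw [← hm a b c]
      congr 1
      ext ω
      simp only [Set.mem_preimage, Set.mem_singleton_iff, Prod.mk.injEq, Set.mem_setOf_eq]
      tauto
    rw [entropy_fintype']
    simp only [Fintype.sum_prod_type]
    rw [sum_zmod2']
    simp only [sum_zmod2', hp, show ((0:ZMod 2)+0) = 0 from rfl,
      show ((0:ZMod 2)+1) = 1 from rfl, show ((1:ZMod 2)+0) = 1 from rfl,
      show ((1:ZMod 2)+1) = 0 from by decide, (by decide : (0:ZMod 2) ≠ 1),
      (by decide : (1:ZMod 2) ≠ 0), if_true, if_false, ite_true, ite_false, reduceIte,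
      ENNReal.toReal_zero, Real.negMulLog_zero, nml_quarter']
    ring
  have e201 : entropy μ (fun ω => (X 2 ω, X 0 ω, X 1 ω)) = 2 * Real.log 2 := by
    have hp : ∀ c a b : ZMod 2, μ ((fun ω => (X 2 ω, X 0 ω, X 1 ω)) ⁻¹' {(c,a,b)})
        = if c = a + b then 1/4 else 0 := by
      intro c a b
      rw [← hm a b c]
      congr 1
      ext ω
      simp only [Set.mem_preimage, Set.mem_singleton_iff, Prod.mk.injEq, Set.mem_setOf_eq]
      tauto
    rw [entropy_fintype']
    simp only [Fintype.sum_prod_type]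
    rw [sum_zmod2']
    simp only [sum_zmod2', hp, show ((0:ZMod 2)+0) = 0 from rfl,
      show ((0:ZMod 2)+1) = 1 from rfl, show ((1:ZMod 2)+0) = 1 from rfl,
      show ((1:ZMod 2)+1) = 0 from by decide, (by decide : (0:ZMod 2) ≠ 1),
      (by decide : (1:ZMod 2) ≠ 0), if_true, if_false, ite_true, ite_false, reduceIte,
      ENNReal.toReal_zero, Real.negMulLog_zero, nml_quarter']
    ring
  refine ⟨?_, ?_, e012.symm⟩
  · unfold mutualInfo
    rw [e0, e1, e2, e12, e02, e01,
      show (fun ω => (X 0 ω, X 1 ω, X 2 ω)) = (fun ω => (X 0 ω, (fun ω => (X 1 ω, X 2 ω)) ω)) from rfl] at *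
    rw [show entropy μ (fun ω => (X 0 ω, (X 1 ω, X 2 ω))) = 2 * Real.log 2 from e012,
      show entropy μ (fun ω => (X 1 ω, (X 0 ω, X 2 ω))) = 2 * Real.log 2 from e102,
      show entropy μ (fun ω => (X 2 ω, (X 0 ω, X 1 ω))) = 2 * Real.log 2 from e201]
    ring
  · have h2 : (0:ℝ) < Real.log 2 := Real.log_pos (by norm_num)
    linarith
end

section
/- SID entropy decomposition identities (equations (8), (9), (10) of the paper): Let S1, S2, S3 be random variables with finite range, and let Ψ : A*({1,2,3}) → ℝ satisfy, for all distinct i, j, k ∈ {1,2,3}: (i) I((S_i, S_j) ; S_k) = Ψ({1}{2}{3}) + Ψ({i}{k}) + Ψ({j}{k}) + Ψ({ij}{k}); (ii) I(S_i ; S_k) = Ψ({1}{2}{3}) + Ψ({i}{k}); (iii) Ψ({k}) = H(S_k | (S_i, S_j)). Then for all distinct i, j, k: (1) H(S_k) = Ψ({1}{2}{3}) + Ψ({ij}{k}) + Ψ({j}{k}) + Ψ({i}{k}) + Ψ({k}); (2) H((S_i, S_k)) equals the sum of the eight atoms Ψ(β) over all β ∈ A*({1,2,3}) other than {ik}{j}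 and {j}; (3) H((S1, S2, S3)) = Σ (the sum of all ten atoms Ψ(β), β ∈ A*({1,2,3})) minus Ψ({ij}{k}); consequently the three synergy-type atoms are equal: Ψ({12}{3}) = Ψ({13}{2}) = Ψ({23}{1}). -/
open MeasureTheory ProbabilityTheory

/-- `α` is an antichain on the finite index set `B`: a nonempty collection of
nonempty subsets of `B`, no member of which is a proper subset of another. -/
def IsAntichainOn (B : Finset ℕ) (α : Finset (Finset ℕ)) : Prop :=
  α.Nonempty ∧ (∀ A ∈ α, A.Nonempty ∧ A ⊆ B) ∧ ∀ A₁ ∈ α, ∀ A₂ ∈ α, ¬ A₁ ⊂ A₂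

instance (B : Finset ℕ) : DecidablePred (IsAntichainOn B) := fun α => by
  unfold IsAntichainOn; infer_instance

/-- The antichain lattice `A(B)` on the finite index set `B`. -/
def antichains (B : Finset ℕ) : Finset (Finset (Finset ℕ)) :=
  B.powerset.powerset.filter (IsAntichainOn B)

/-- The order on antichains: `precEq β α` means `β ⪯ α`, i.e. for every `A ∈ α`
there is `B ∈ β` with `B ⊆ A`. -/
def precEq (β α : Finset (Finset ℕ)) : Prop := ∀ A ∈ α, ∃ B ∈ β, B ⊆ A

instance : ∀ β α : Finset (Finset ℕ), Decidable (precEq β α) := fun β α => by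
  unfold precEq; infer_instance

/-- The index set `{1, 2, 3}`. -/
def N3 : Finset ℕ := {1, 2, 3}

/-- The 18-element antichain lattice `A({1,2,3})`. -/
def AC3 : Finset (Finset (Finset ℕ)) := antichains N3

/-- The SID half lattice `A*({1,2,3})`: the ten antichains on `{1,2,3}`
containing at least one singleton. -/
def ACstar : Finset (Finset (Finset ℕ)) :=
  AC3.filter (fun α => ∃ A ∈ α, A.card = 1)

set_option maxHeartbeats 4000000

section SIDAux

open Real Function

private lemma entropy_comp {Ω : Type*} [MeasurableSpace Ω] {α β : Type*}
    (μ : MeasureTheory.Measure Ω) (X : Ω → α) (f : α → β) (hf : Function.Injective f) :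
    entropy μ (fun ω => f (X ω)) = entropy μ X := by
  have hsupp : Function.support
      (fun b => Real.negMulLog (μ ((fun ω => f (X ω)) ⁻¹' {b})).toReal) ⊆ Set.range f := by
    intro b hb
    by_contra hbr
    apply hb
    have hempty : (fun ω => f (X ω)) ⁻¹' {b} = ∅ := by
      ext ω
      simp only [Set.mem_preimage, Set.mem_singleton_iff, Set.mem_empty_iff_false, iff_false]
      intro h
      exact hbr ⟨X ω, h⟩
    simp [hempty]
  have key := hf.tsum_eq
    (f := fun b => Real.negMulLog (μ ((fun ω => f (X ω)) ⁻¹' {b})).toReal) hsupp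
  unfold entropy
  rw [← key]
  apply tsum_congr
  intro a
  have hpre : (fun ω => f (X ω)) ⁻¹' {f a} = X ⁻¹' {a} := by
    ext ω
    simp [hf.eq_iff]
  simp only [hpre]

private lemma fsn1 : ({2, 1} : Finset ℕ) = {1, 2} := by decide
private lemma fsn2 : ({3, 1} : Finset ℕ) = {1, 3} := by decide
private lemma fsn3 : ({3, 2} : Finset ℕ) = {2, 3} := by decide
private lemma fsm1 : ({{2}, {1}} : Finset (Finset ℕ)) = {{1}, {2}} := by decide
private lemma fsm2 : ({{3}, {1}} : Finset (Finset ℕ)) = {{1}, {3}} := by decide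
private lemma fsm3 : ({{3}, {2}} : Finset (Finset ℕ)) = {{2}, {3}} := by decide
private lemma fsp1 : ({{3}, {1, 2}} : Finset (Finset ℕ)) = {{1, 2}, {3}} := by decide
private lemma fsp2 : ({{2}, {1, 3}} : Finset (Finset ℕ)) = {{1, 3}, {2}} := by decide
private lemma fsp3 : ({{1}, {2, 3}} : Finset (Finset ℕ)) = {{2, 3}, {1}} := by decide

private lemma sumL0 (Ψ : Finset (Finset ℕ) → ℝ) :
    ∑ β ∈ ACstar, Ψ β =
      Ψ {{1}} + Ψ {{2}} + Ψ {{1}, {2}} + Ψ {{3}} + Ψ {{1}, {3}} + Ψ {{2}, {3}} +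
      Ψ {{1}, {2}, {3}} + Ψ {{1, 2}, {3}} + Ψ {{1, 3}, {2}} + Ψ {{2, 3}, {1}} := by
  rw [show ACstar = ({{{1}}, {{2}}, {{1}, {2}}, {{3}}, {{1}, {3}}, {{2}, {3}},
      {{1}, {2}, {3}}, {{1, 2}, {3}}, {{1, 3}, {2}}, {{2, 3}, {1}}} :
      Finset (Finset (Finset ℕ))) from by decide]
  rw [Finset.sum_insert (by decide), Finset.sum_insert (by decide),
    Finset.sum_insert (by decide), Finset.sum_insert (by decide),
    Finset.sum_insert (by decide), Finset.sum_insert (by decide),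
    Finset.sum_insert (by decide), Finset.sum_insert (by decide),
    Finset.sum_insert (by decide), Finset.sum_singleton]
  ring

private lemma sumLA (Ψ : Finset (Finset ℕ) → ℝ) :
    ∑ β ∈ ACstar \ {{{1, 3}, {2}}, {{2}}}, Ψ β =
      Ψ {{1}} + Ψ {{1}, {2}} + Ψ {{3}} + Ψ {{1}, {3}} + Ψ {{2}, {3}} +
      Ψ {{1}, {2}, {3}} + Ψ {{1, 2}, {3}} + Ψ {{2, 3}, {1}} := by
  rw [show ACstar \ {{{1, 3}, {2}}, {{2}}} = ({{{1}}, {{1}, {2}}, {{3}}, {{1}, {3}},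
      {{2}, {3}}, {{1}, {2}, {3}}, {{1, 2}, {3}}, {{2, 3}, {1}}} :
      Finset (Finset (Finset ℕ))) from by decide]
  rw [Finset.sum_insert (by decide), Finset.sum_insert (by decide),
    Finset.sum_insert (by decide), Finset.sum_insert (by decide),
    Finset.sum_insert (by decide), Finset.sum_insert (by decide),
    Finset.sum_insert (by decide), Finset.sum_singleton]
  ring

private lemma sumLB (Ψ : Finset (Finset ℕ) → ℝ) :
    ∑ β ∈ ACstar \ {{{1, 2}, {3}}, {{3}}}, Ψ β =
      Ψ {{1}} + Ψ {{2}} + Ψ {{1}, {2}} + Ψ {{1}, {3}} + Ψ {{2}, {3}} +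
      Ψ {{1}, {2}, {3}} + Ψ {{1, 3}, {2}} + Ψ {{2, 3}, {1}} := by
  rw [show ACstar \ {{{1, 2}, {3}}, {{3}}} = ({{{1}}, {{2}}, {{1}, {2}}, {{1}, {3}},
      {{2}, {3}}, {{1}, {2}, {3}}, {{1, 3}, {2}}, {{2, 3}, {1}}} :
      Finset (Finset (Finset ℕ))) from by decide]
  rw [Finset.sum_insert (by decide), Finset.sum_insert (by decide),
    Finset.sum_insert (by decide), Finset.sum_insert (by decide),
    Finset.sum_insert (by decide), Finset.sum_insert (by decide),
    Finset.sum_insert (by decide), Finset.sum_singleton]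
  ring

private lemma sumLC (Ψ : Finset (Finset ℕ) → ℝ) :
    ∑ β ∈ ACstar \ {{{2, 3}, {1}}, {{1}}}, Ψ β =
      Ψ {{2}} + Ψ {{1}, {2}} + Ψ {{3}} + Ψ {{1}, {3}} + Ψ {{2}, {3}} +
      Ψ {{1}, {2}, {3}} + Ψ {{1, 2}, {3}} + Ψ {{1, 3}, {2}} := by
  rw [show ACstar \ {{{2, 3}, {1}}, {{1}}} = ({{{2}}, {{1}, {2}}, {{3}}, {{1}, {3}},
      {{2}, {3}}, {{1}, {2}, {3}}, {{1, 2}, {3}}, {{1, 3}, {2}}} :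
      Finset (Finset (Finset ℕ))) from by decide]
  rw [Finset.sum_insert (by decide), Finset.sum_insert (by decide),
    Finset.sum_insert (by decide), Finset.sum_insert (by decide),
    Finset.sum_insert (by decide), Finset.sum_insert (by decide),
    Finset.sum_insert (by decide), Finset.sum_singleton]
  ring

private lemma mem3_cases {i j k : ℕ} (hi : i ∈ N3) (hj : j ∈ N3) (hk : k ∈ N3)
    (hij : i ≠ j) (hik : i ≠ k) (hjk : j ≠ k) :
    (i = 1 ∧ j = 2 ∧ k = 3) ∨ (i = 1 ∧ j = 3 ∧ k = 2) ∨
    (i = 2 ∧ j = 1 ∧ k = 3) ∨ (i = 2 ∧ j = 3 ∧ k = 1) ∨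
    (i = 3 ∧ j = 1 ∧ k = 2) ∨ (i = 3 ∧ j = 2 ∧ k = 1) := by
  simp only [N3, Finset.mem_insert, Finset.mem_singleton] at hi hj hk
  rcases hi with rfl | rfl | rfl <;> rcases hj with rfl | rfl | rfl <;>
    rcases hk with rfl | rfl | rfl <;> simp_all

end SIDAux

/-- **SID entropy decomposition identities (equations (8), (9), (10)).**
From the SID constraints (i)–(iii) one obtains the decompositions of `H(S_k)`,
`H((S_i, S_k))` and `H((S1,S2,S3))`, the latter being the sum `Σ` of all ten
SI-atoms minus `Ψ({ij}{k})`; consequently the three synergy-type atoms agree. -/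
theorem sid_entropy_decompositions
    {Ω α' : Type*} [MeasurableSpace Ω] [MeasurableSpace α']
    (μ : Measure Ω) [IsProbabilityMeasure μ]
    (S : ℕ → Ω → α') (hmeas : ∀ i ∈ N3, Measurable (S i))
    (hfin : ∀ i ∈ N3, (Set.range (S i)).Finite)
    (Ψ : Finset (Finset ℕ) → ℝ)
    -- (i) I((S_i, S_j); S_k) = Ψ({1}{2}{3}) + Ψ({i}{k}) + Ψ({j}{k}) + Ψ({ij}{k})
    (hI : ∀ i ∈ N3, ∀ j ∈ N3, ∀ k ∈ N3, i ≠ j → i ≠ k → j ≠ k →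
      mutualInfo μ (fun ω => (S i ω, S j ω)) (S k) =
        Ψ {{1}, {2}, {3}} + Ψ {{i}, {k}} + Ψ {{j}, {k}} + Ψ {{i, j}, {k}})
    -- (ii) I(S_i; S_k) = Ψ({1}{2}{3}) + Ψ({i}{k})
    (hII : ∀ i ∈ N3, ∀ k ∈ N3, i ≠ k →
      mutualInfo μ (S i) (S k) = Ψ {{1}, {2}, {3}} + Ψ {{i}, {k}})
    -- (iii) Ψ({k}) = H(S_k | (S_i, S_j))
    (hIII : ∀ i ∈ N3, ∀ j ∈ N3, ∀ k ∈ N3, i ≠ j → i ≠ k → j ≠ k →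
      Ψ {{k}} = condEntropy μ (S k) (fun ω => (S i ω, S j ω))) :
    (∀ i ∈ N3, ∀ j ∈ N3, ∀ k ∈ N3, i ≠ j → i ≠ k → j ≠ k →
      -- (1) H(S_k) = Ψ({1}{2}{3}) + Ψ({ij}{k}) + Ψ({j}{k}) + Ψ({i}{k}) + Ψ({k})
      (entropy μ (S k) =
        Ψ {{1}, {2}, {3}} + Ψ {{i, j}, {k}} + Ψ {{j}, {k}} + Ψ {{i}, {k}} + Ψ {{k}})
      -- (2) H((S_i, S_k)) = sum of the eight atoms other than {ik}{j} and {j}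
      ∧ (entropy μ (fun ω => (S i ω, S k ω)) =
          ∑ β ∈ ACstar \ {({{i, k}, {j}} : Finset (Finset ℕ)), {{j}}}, Ψ β)
      -- (3) H((S1,S2,S3)) = Σ − Ψ({ij}{k})
      ∧ (entropy μ (fun ω => (S 1 ω, S 2 ω, S 3 ω)) =
          (∑ β ∈ ACstar, Ψ β) - Ψ {{i, j}, {k}}))
    -- consequently the three synergy-type atoms are equal
    ∧ Ψ {{1, 2}, {3}} = Ψ {{1, 3}, {2}}
    ∧ Ψ {{1, 3}, {2}} = Ψ {{2, 3}, {1}} := by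
  
  -- Key identity (1): H(S_k) decomposition
  have key1 : ∀ i ∈ N3, ∀ j ∈ N3, ∀ k ∈ N3, i ≠ j → i ≠ k → j ≠ k →
      entropy μ (S k) =
        Ψ {{1}, {2}, {3}} + Ψ {{i, j}, {k}} + Ψ {{j}, {k}} + Ψ {{i}, {k}} + Ψ {{k}} := by
    intro i hi j hj k hk hij hik hjk
    have e1 := hI i hi j hj k hk hij hik hjk
    have e2 := hIII i hi j hj k hk hij hik hjk
    have e3 : entropy μ (fun ω => (S k ω, (S i ω, S j ω))) =
        entropy μ (fun ω => ((S i ω, S j ω), S k ω)) :=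
      entropy_comp μ (fun ω => ((S i ω, S j ω), S k ω)) Prod.swap Prod.swap_injective
    simp only [mutualInfo] at e1
    simp only [condEntropy] at e2
    linarith
  -- Key identity (2): H(S_i, S_j) decomposition
  have key2 : ∀ i ∈ N3, ∀ j ∈ N3, ∀ k ∈ N3, i ≠ j → i ≠ k → j ≠ k →
      entropy μ (fun ω => (S i ω, S j ω)) =
        Ψ {{1}, {2}, {3}} + Ψ {{j, k}, {i}} + Ψ {{i, k}, {j}} + Ψ {{k}, {i}} +
        Ψ {{k}, {j}} + Ψ {{i}, {j}} + Ψ {{i}} + Ψ {{j}} := by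
    intro i hi j hj k hk hij hik hjk
    have e1 := key1 j hj k hk i hi hjk (Ne.symm hij) (Ne.symm hik)
    have e2 := key1 i hi k hk j hj hik hij (Ne.symm hjk)
    have e3 := hII i hi j hj hij
    rw [Finset.pair_comm ({j} : Finset ℕ) {i}] at e1
    simp only [mutualInfo] at e3
    linarith
  -- Chain rule: H((S_i,S_j),S_k) = H(S_i,S_j) + Ψ({k})
  have key3 : ∀ i ∈ N3, ∀ j ∈ N3, ∀ k ∈ N3, i ≠ j → i ≠ k → j ≠ k →
      entropy μ (fun ω => ((S i ω, S j ω), S k ω)) =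
        entropy μ (fun ω => (S i ω, S j ω)) + Ψ {{k}} := by
    intro i hi j hj k hk hij hik hjk
    have e2 := hIII i hi j hj k hk hij hik hjk
    have e3 : entropy μ (fun ω => (S k ω, (S i ω, S j ω))) =
        entropy μ (fun ω => ((S i ω, S j ω), S k ω)) :=
      entropy_comp μ (fun ω => ((S i ω, S j ω), S k ω)) Prod.swap Prod.swap_injective
    simp only [condEntropy] at e2
    linarith
  have main : ∀ i ∈ N3, ∀ j ∈ N3, ∀ k ∈ N3, i ≠ j → i ≠ k → j ≠ k →
      (entropy μ (S k) =
        Ψ {{1}, {2}, {3}} + Ψ {{i, j}, {k}} + Ψ {{j}, {k}} + Ψ {{i}, {k}} + Ψ {{k}})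
      ∧ (entropy μ (fun ω => (S i ω, S k ω)) =
          ∑ β ∈ ACstar \ {({{i, k}, {j}} : Finset (Finset ℕ)), {{j}}}, Ψ β)
      ∧ (entropy μ (fun ω => (S 1 ω, S 2 ω, S 3 ω)) =
          (∑ β ∈ ACstar, Ψ β) - Ψ {{i, j}, {k}}) := by
    intro i hi j hj k hk hij hik hjk
    refine ⟨key1 i hi j hj k hk hij hik hjk, ?_, ?_⟩
    · -- pair decomposition
      have e := key2 i hi k hk j hj hik hij (Ne.symm hjk)
      have hc := mem3_cases hi hj hk hij hik hjk
      rcases hc with ⟨rfl, rfl, rfl⟩ | ⟨rfl, rfl, rfl⟩ | ⟨rfl, rfl, rfl⟩ |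
        ⟨rfl, rfl, rfl⟩ | ⟨rfl, rfl, rfl⟩ | ⟨rfl, rfl, rfl⟩
      · try simp only [fsn1, fsn2, fsn3, fsm1, fsm2, fsm3, fsp1, fsp2, fsp3] at e
        try simp only [fsn1, fsn2, fsn3, fsm1, fsm2, fsm3, fsp1, fsp2, fsp3]
        rw [sumLA Ψ]; linarith
      · try simp only [fsn1, fsn2, fsn3, fsm1, fsm2, fsm3, fsp1, fsp2, fsp3] at e
        try simp only [fsn1, fsn2, fsn3, fsm1, fsm2, fsm3, fsp1, fsp2, fsp3]
        rw [sumLB Ψ]; linarith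
      · try simp only [fsn1, fsn2, fsn3, fsm1, fsm2, fsm3, fsp1, fsp2, fsp3] at e
        try simp only [fsn1, fsn2, fsn3, fsm1, fsm2, fsm3, fsp1, fsp2, fsp3]
        rw [sumLC Ψ]; linarith
      · try simp only [fsn1, fsn2, fsn3, fsm1, fsm2, fsm3, fsp1, fsp2, fsp3] at e
        try simp only [fsn1, fsn2, fsn3, fsm1, fsm2, fsm3, fsp1, fsp2, fsp3]
        rw [sumLB Ψ]; linarith
      · try simp only [fsn1, fsn2, fsn3, fsm1, fsm2, fsm3, fsp1, fsp2, fsp3] at e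
        try simp only [fsn1, fsn2, fsn3, fsm1, fsm2, fsm3, fsp1, fsp2, fsp3]
        rw [sumLC Ψ]; linarith
      · try simp only [fsn1, fsn2, fsn3, fsm1, fsm2, fsm3, fsp1, fsp2, fsp3] at e
        try simp only [fsn1, fsn2, fsn3, fsm1, fsm2, fsm3, fsp1, fsp2, fsp3]
        rw [sumLA Ψ]; linarith
    · -- triple decomposition
      have t1 := key3 i hi j hj k hk hij hik hjk
      have t2 := key2 i hi j hj k hk hij hik hjk
      have hc := mem3_cases hi hj hk hij hik hjk
      rcases hc with ⟨rfl, rfl, rfl⟩ | ⟨rfl, rfl, rfl⟩ | ⟨rfl, rfl, rfl⟩ |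
        ⟨rfl, rfl, rfl⟩ | ⟨rfl, rfl, rfl⟩ | ⟨rfl, rfl, rfl⟩
      · have t3 : entropy μ (fun ω => ((S 1 ω, S 2 ω), S 3 ω)) =
            entropy μ (fun ω => (S 1 ω, S 2 ω, S 3 ω)) :=
          entropy_comp μ (fun ω => (S 1 ω, (S 2 ω, S 3 ω)))
            (fun p => ((p.1, p.2.1), p.2.2))
            (by intro a b h; simp only [Prod.ext_iff] at h ⊢; tauto)
        try simp only [fsn1, fsn2, fsn3, fsm1, fsm2, fsm3, fsp1, fsp2, fsp3] at t2
        try simp only [fsn1, fsn2, fsn3, fsm1, fsm2, fsm3, fsp1, fsp2, fsp3]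
        rw [sumL0 Ψ]; linarith
      · have t3 : entropy μ (fun ω => ((S 1 ω, S 3 ω), S 2 ω)) =
            entropy μ (fun ω => (S 1 ω, S 2 ω, S 3 ω)) :=
          entropy_comp μ (fun ω => (S 1 ω, (S 2 ω, S 3 ω)))
            (fun p => ((p.1, p.2.2), p.2.1))
            (by intro a b h; simp only [Prod.ext_iff] at h ⊢; tauto)
        try simp only [fsn1, fsn2, fsn3, fsm1, fsm2, fsm3, fsp1, fsp2, fsp3] at t2
        try simp only [fsn1, fsn2, fsn3, fsm1, fsm2, fsm3, fsp1, fsp2, fsp3]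
        rw [sumL0 Ψ]; linarith
      · have t3 : entropy μ (fun ω => ((S 2 ω, S 1 ω), S 3 ω)) =
            entropy μ (fun ω => (S 1 ω, S 2 ω, S 3 ω)) :=
          entropy_comp μ (fun ω => (S 1 ω, (S 2 ω, S 3 ω)))
            (fun p => ((p.2.1, p.1), p.2.2))
            (by intro a b h; simp only [Prod.ext_iff] at h ⊢; tauto)
        try simp only [fsn1, fsn2, fsn3, fsm1, fsm2, fsm3, fsp1, fsp2, fsp3] at t2
        try simp only [fsn1, fsn2, fsn3, fsm1, fsm2, fsm3, fsp1, fsp2, fsp3]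
        rw [sumL0 Ψ]; linarith
      · have t3 : entropy μ (fun ω => ((S 2 ω, S 3 ω), S 1 ω)) =
            entropy μ (fun ω => (S 1 ω, S 2 ω, S 3 ω)) :=
          entropy_comp μ (fun ω => (S 1 ω, (S 2 ω, S 3 ω)))
            (fun p => ((p.2.1, p.2.2), p.1))
            (by intro a b h; simp only [Prod.ext_iff] at h ⊢; tauto)
        try simp only [fsn1, fsn2, fsn3, fsm1, fsm2, fsm3, fsp1, fsp2, fsp3] at t2
        try simp only [fsn1, fsn2, fsn3, fsm1, fsm2, fsm3, fsp1, fsp2, fsp3]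
        rw [sumL0 Ψ]; linarith
      · have t3 : entropy μ (fun ω => ((S 3 ω, S 1 ω), S 2 ω)) =
            entropy μ (fun ω => (S 1 ω, S 2 ω, S 3 ω)) :=
          entropy_comp μ (fun ω => (S 1 ω, (S 2 ω, S 3 ω)))
            (fun p => ((p.2.2, p.1), p.2.1))
            (by intro a b h; simp only [Prod.ext_iff] at h ⊢; tauto)
        try simp only [fsn1, fsn2, fsn3, fsm1, fsm2, fsm3, fsp1, fsp2, fsp3] at t2
        try simp only [fsn1, fsn2, fsn3, fsm1, fsm2, fsm3, fsp1, fsp2, fsp3]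
        rw [sumL0 Ψ]; linarith
      · have t3 : entropy μ (fun ω => ((S 3 ω, S 2 ω), S 1 ω)) =
            entropy μ (fun ω => (S 1 ω, S 2 ω, S 3 ω)) :=
          entropy_comp μ (fun ω => (S 1 ω, (S 2 ω, S 3 ω)))
            (fun p => ((p.2.2, p.2.1), p.1))
            (by intro a b h; simp only [Prod.ext_iff] at h ⊢; tauto)
        try simp only [fsn1, fsn2, fsn3, fsm1, fsm2, fsm3, fsp1, fsp2, fsp3] at t2
        try simp only [fsn1, fsn2, fsn3, fsm1, fsm2, fsm3, fsp1, fsp2, fsp3]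
        rw [sumL0 Ψ]; linarith
  have h1 : (1 : ℕ) ∈ N3 := by decide
  have h2 : (2 : ℕ) ∈ N3 := by decide
  have h3 : (3 : ℕ) ∈ N3 := by decide
  have b1 := (main 1 h1 2 h2 3 h3 (by decide) (by decide) (by decide)).2.2
  have b2 := (main 1 h1 3 h3 2 h2 (by decide) (by decide) (by decide)).2.2
  have b3 := (main 2 h2 3 h3 1 h1 (by decide) (by decide) (by decide)).2.2
  exact ⟨main, by linarith, by linarith⟩
end

section
/- Uniqueness of SI-atoms given the redundancy atom (Lemma 4): Let M be the 9×10 real matrix whose rows are [1,1,1,0,1,0,0,1,0,0], [1,1,0,1,0,1,0,0,1,0], [1,0,1,1,0,0,1,0,0,1], [1,1,1,1,1,1,0,1,1,0], [1,1,1,1,1,0,1,1,0,1], [1,1,1,1,0,1,1,0,1,1], [1,1,1,1,1,1,0,1,1,1], [1,1,1,1,1,0,1,1,1,1], [1,1,1,1,0,1,1,1,1,1]. If x, y ∈ ℝ^10 satisfy M x = M y and x and y agree in their first coordinate, then x = y. Equivalently, every v in the kernel of M whose first coordinate is 0 is the zero vector. -/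
/-- The 9×10 matrix `M` encoding the nine linear constraints of SID Axiom 1
relating the ten SI-atoms (ordered `Ψ({1}{2}{3})`, `Ψ({1}{2})`, `Ψ({1}{3})`,
`Ψ({2}{3})`, `Ψ({1}{23})`, `Ψ({2}{13})`, `Ψ({3}{12})`, `Ψ({1})`, `Ψ({2})`,
`Ψ({3})`) to the entropies. -/
def sidMatrix : Matrix (Fin 9) (Fin 10) ℝ :=
  !![1,1,1,0,1,0,0,1,0,0;
     1,1,0,1,0,1,0,0,1,0;
     1,0,1,1,0,0,1,0,0,1;
     1,1,1,1,1,1,0,1,1,0;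
     1,1,1,1,1,0,1,1,0,1;
     1,1,1,1,0,1,1,0,1,1;
     1,1,1,1,1,1,0,1,1,1;
     1,1,1,1,1,0,1,1,1,1;
     1,1,1,1,0,1,1,1,1,1]

private lemma s_0_1 : Fin.succ (0 : Fin 1) = 1 := rfl
private lemma s_0_2 : Fin.succ (0 : Fin 2) = 1 := rfl
private lemma s_0_3 : Fin.succ (0 : Fin 3) = 1 := rfl
private lemma s_0_4 : Fin.succ (0 : Fin 4) = 1 := rfl
private lemma s_0_5 : Fin.succ (0 : Fin 5) = 1 := rfl
private lemma s_0_6 : Fin.succ (0 : Fin 6) = 1 := rfl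
private lemma s_0_7 : Fin.succ (0 : Fin 7) = 1 := rfl
private lemma s_0_8 : Fin.succ (0 : Fin 8) = 1 := rfl
private lemma s_0_9 : Fin.succ (0 : Fin 9) = 1 := rfl
private lemma s_1_2 : Fin.succ (1 : Fin 2) = 2 := rfl
private lemma s_1_3 : Fin.succ (1 : Fin 3) = 2 := rfl
private lemma s_1_4 : Fin.succ (1 : Fin 4) = 2 := rfl
private lemma s_1_5 : Fin.succ (1 : Fin 5) = 2 := rfl
private lemma s_1_6 : Fin.succ (1 : Fin 6) = 2 := rfl
private lemma s_1_7 : Fin.succ (1 : Fin 7) = 2 := rfl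
private lemma s_1_8 : Fin.succ (1 : Fin 8) = 2 := rfl
private lemma s_1_9 : Fin.succ (1 : Fin 9) = 2 := rfl
private lemma s_2_3 : Fin.succ (2 : Fin 3) = 3 := rfl
private lemma s_2_4 : Fin.succ (2 : Fin 4) = 3 := rfl
private lemma s_2_5 : Fin.succ (2 : Fin 5) = 3 := rfl
private lemma s_2_6 : Fin.succ (2 : Fin 6) = 3 := rfl
private lemma s_2_7 : Fin.succ (2 : Fin 7) = 3 := rfl
private lemma s_2_8 : Fin.succ (2 : Fin 8) = 3 := rfl
private lemma s_2_9 : Fin.succ (2 : Fin 9) = 3 := rfl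
private lemma s_3_4 : Fin.succ (3 : Fin 4) = 4 := rfl
private lemma s_3_5 : Fin.succ (3 : Fin 5) = 4 := rfl
private lemma s_3_6 : Fin.succ (3 : Fin 6) = 4 := rfl
private lemma s_3_7 : Fin.succ (3 : Fin 7) = 4 := rfl
private lemma s_3_8 : Fin.succ (3 : Fin 8) = 4 := rfl
private lemma s_3_9 : Fin.succ (3 : Fin 9) = 4 := rfl
private lemma s_4_5 : Fin.succ (4 : Fin 5) = 5 := rfl
private lemma s_4_6 : Fin.succ (4 : Fin 6) = 5 := rfl
private lemma s_4_7 : Fin.succ (4 : Fin 7) = 5 := rfl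
private lemma s_4_8 : Fin.succ (4 : Fin 8) = 5 := rfl
private lemma s_4_9 : Fin.succ (4 : Fin 9) = 5 := rfl
private lemma s_5_6 : Fin.succ (5 : Fin 6) = 6 := rfl
private lemma s_5_7 : Fin.succ (5 : Fin 7) = 6 := rfl
private lemma s_5_8 : Fin.succ (5 : Fin 8) = 6 := rfl
private lemma s_5_9 : Fin.succ (5 : Fin 9) = 6 := rfl
private lemma s_6_7 : Fin.succ (6 : Fin 7) = 7 := rfl
private lemma s_6_8 : Fin.succ (6 : Fin 8) = 7 := rfl
private lemma s_6_9 : Fin.succ (6 : Fin 9) = 7 := rfl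
private lemma s_7_8 : Fin.succ (7 : Fin 8) = 8 := rfl
private lemma s_7_9 : Fin.succ (7 : Fin 9) = 8 := rfl
private lemma s_8_9 : Fin.succ (8 : Fin 9) = 9 := rfl

private lemma cv5 {α : Type*} {n : ℕ} (a : α) (u : Fin (n + 5) → α) :
    Matrix.vecCons a u 5 = u 4 := rfl
private lemma cv6 {α : Type*} {n : ℕ} (a : α) (u : Fin (n + 6) → α) :
    Matrix.vecCons a u 6 = u 5 := rfl
private lemma cv7 {α : Type*} {n : ℕ} (a : α) (u : Fin (n + 7) → α) :
    Matrix.vecCons a u 7 = u 6 := rfl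
private lemma cv8 {α : Type*} {n : ℕ} (a : α) (u : Fin (n + 8) → α) :
    Matrix.vecCons a u 8 = u 7 := rfl
private lemma cv9 {α : Type*} {n : ℕ} (a : α) (u : Fin (n + 9) → α) :
    Matrix.vecCons a u 9 = u 8 := rfl

lemma sid_ker (v : Fin 10 → ℝ) (hv : sidMatrix.mulVec v = 0) (h0 : v 0 = 0) : v = 0 := by
  have e0 := congrFun hv 0
  have e1 := congrFun hv 1
  have e2 := congrFun hv 2
  have e3 := congrFun hv 3
  have e4 := congrFun hv 4
  have e5 := congrFun hv 5
  have e6 := congrFun hv 6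
  have e7 := congrFun hv 7
  have e8 := congrFun hv 8
  simp [sidMatrix, Matrix.mulVec, dotProduct, Fin.sum_univ_succ,
    cv5, cv6, cv7, cv8, cv9, s_0_1, s_0_2, s_0_3, s_0_4, s_0_5, s_0_6, s_0_7, s_0_8, s_0_9, s_1_2, s_1_3, s_1_4, s_1_5, s_1_6, s_1_7, s_1_8, s_1_9, s_2_3, s_2_4, s_2_5, s_2_6, s_2_7, s_2_8, s_2_9, s_3_4, s_3_5, s_3_6, s_3_7, s_3_8, s_3_9, s_4_5, s_4_6, s_4_7, s_4_8, s_4_9, s_5_6, s_5_7, s_5_8, s_5_9, s_6_7, s_6_8, s_6_9, s_7_8, s_7_9, s_8_9]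
    at e0 e1 e2 e3 e4 e5 e6 e7 e8
  funext i
  fin_cases i <;> simp <;> linarith

/-- **Uniqueness of SI-atoms given the redundancy atom (Lemma 4).** If two
solutions of the SID constraint system agree in the redundancy atom (the first
coordinate), they coincide; equivalently, any kernel vector of `sidMatrix` with
vanishing first coordinate is zero. -/
theorem si_atoms_unique_given_redundancy :
    (∀ x y : Fin 10 → ℝ, sidMatrix.mulVec x = sidMatrix.mulVec y → x 0 = y 0 → x = y)
    ∧ (∀ v : Fin 10 → ℝ, sidMatrix.mulVec v = 0 → v 0 = 0 → v = 0) := by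
  constructor
  · intro x y hxy h0
    have hk : sidMatrix.mulVec (x - y) = 0 := by
      rw [Matrix.mulVec_sub, hxy, sub_self]
    have hz := sid_ker (x - y) hk (by simp [h0])
    funext i
    have := congrFun hz i
    simpa [sub_eq_zero] using this
  · exact sid_ker
end

section
/- Explicit SI-atoms solve the SID constraint system (equation (14)): Let S1, S2, S3 be random variables with finite range and let r ∈ ℝ. Define x(r) ∈ ℝ^10 (coordinates ordered as (Ψ({1}{2}{3}), Ψ({1}{2}), Ψ({1}{3}), Ψ({2}{3}), Ψ({1}{23}), Ψ({2}{13}), Ψ({3}{12}), Ψ({1}), Ψ({2}), Ψ({3}))) by: Ψ({1}{2}{3}) = r; Ψ({i}{j}) = H(S_i) + H(S_j) − H((S_i,S_j)) − r for each pair {i,j}; Ψ({i}{jk}) = −H(S1) − H(S2) − H(S3) + H((S1,S2)) + H((S1,S3)) + H((S2,S3)) − H((S1,S2,S3)) + r for each i (with {j,k} the complement); Ψ({i}) = H((S1,S2,S3)) − H((S_j,S_k)) for each i. Then M x(r) = Y, where M is the 9×10 matrix with rows [1,1,1,0,1,0,0,1,0,0], [1,1,0,1,0,1,0,0,1,0],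 [1,0,1,1,0,0,1,0,0,1], [1,1,1,1,1,1,0,1,1,0], [1,1,1,1,1,0,1,1,0,1], [1,1,1,1,0,1,1,0,1,1], [1,1,1,1,1,1,0,1,1,1], [1,1,1,1,1,0,1,1,1,1], [1,1,1,1,0,1,1,1,1,1], and Y = (H(S1), H(S2), H(S3), H((S1,S2)), H((S1,S3)), H((S2,S3)), H((S1,S2,S3)), H((S1,S2,S3)), H((S1,S2,S3))). -/
open MeasureTheory ProbabilityTheory

/-- **Explicit SI-atoms solve the SID constraint system (equation (14)).**
For any value `r` of the redundancy atom, the explicit vector `x(r)` of SI-atoms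
built from the entropies of `S1, S2, S3` satisfies `M x(r) = Y`. -/
theorem explicit_si_atoms_solve_sid
    {Ω α : Type*} [MeasurableSpace Ω] [MeasurableSpace α]
    (μ : Measure Ω) [IsProbabilityMeasure μ]
    (S1 S2 S3 : Ω → α)
    (h1 : Measurable S1) (h2 : Measurable S2) (h3 : Measurable S3)
    (hf1 : (Set.range S1).Finite) (hf2 : (Set.range S2).Finite)
    (hf3 : (Set.range S3).Finite)
    (r : ℝ)
    (H1 H2 H3 H12 H13 H23 H123 : ℝ)
    (hH1 : H1 = entropy μ S1) (hH2 : H2 = entropy μ S2) (hH3 : H3 = entropy μ S3)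
    (hH12 : H12 = entropy μ (fun ω => (S1 ω, S2 ω)))
    (hH13 : H13 = entropy μ (fun ω => (S1 ω, S3 ω)))
    (hH23 : H23 = entropy μ (fun ω => (S2 ω, S3 ω)))
    (hH123 : H123 = entropy μ (fun ω => (S1 ω, S2 ω, S3 ω))) :
    sidMatrix.mulVec
      ![r,
        H1 + H2 - H12 - r,
        H1 + H3 - H13 - r,
        H2 + H3 - H23 - r,
        -H1 - H2 - H3 + H12 + H13 + H23 - H123 + r,
        -H1 - H2 - H3 + H12 + H13 + H23 - H123 + r,
        -H1 - H2 - H3 + H12 + H13 + H23 - H123 + r,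
        H123 - H23,
        H123 - H13,
        H123 - H12]
      = ![H1, H2, H3, H12, H13, H23, H123, H123, H123] := by
  simp only [sidMatrix, Matrix.cons_mulVec, Matrix.cons_dotProduct,
    Matrix.dotProduct_of_isEmpty, Matrix.empty_mulVec]
  funext i
  fin_cases i <;> simp <;> ring
end

section
/- Entropy facts for System 1 (used in Lemma 6): for System 1 the following hold: (1) I(T̂ ; (Ŝ1, Ŝ2, Ŝ3)) = H(T̂) = 3·Real.log 2; (2) I(x1 ; Ŝ2) = 0 and I(x1 ; Ŝ3) = 0; (3) I(x1 ; Ŝ1) = Real.log 2; (4) H((x1, Ŝ1) | (Ŝ2, Ŝ3)) = 0. -/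
open MeasureTheory ProbabilityTheory

private abbrev B' := ZMod 2
private abbrev B6' := B' × B' × B' × B' × B' × B'

open Finset in
private lemma entropy_comp' {Ω : Type*} [MeasurableSpace Ω] (μ : Measure Ω)
    (V : Ω → B6') (hVm : ∀ v : B6', MeasurableSet (V ⁻¹' {v}))
    (hV : ∀ v : B6', μ (V ⁻¹' {v}) = 1/64)
    {α : Type*} [Fintype α] [DecidableEq α] (f : B6' → α) (k : ℕ) (hk : k ≠ 0)
    (hcount : ∀ a : α, (univ.filter (fun v => f v = a)).card = k ∨
      (univ.filter (fun v => f v = a)).card = 0) :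
    entropy μ (f ∘ V) = Real.log (64 / (k : ℝ)) := by
  have hmeasure : ∀ a : α, μ ((f ∘ V) ⁻¹' {a})
      = ((univ.filter (fun v => f v = a)).card : ENNReal) / 64 := by
    intro a
    have hset : (f ∘ V) ⁻¹' {a} = ⋃ v ∈ univ.filter (fun v => f v = a), V ⁻¹' {v} := by
      ext ω
      simp only [Set.mem_preimage, Function.comp_apply, Set.mem_singleton_iff,
        Set.mem_iUnion, mem_filter, mem_univ, true_and]
      constructor
      · intro h; exact ⟨V ω, h, rfl⟩
      · rintro ⟨v, hv, h⟩
        rw [h]; exact hv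
    rw [hset, measure_biUnion_finset ?_ (fun v _ => hVm v)]
    · simp_rw [hV]
      rw [Finset.sum_const, nsmul_eq_mul, mul_one_div]
    · intro v hv w hw hvw
      simp only [Function.onFun]
      rw [Set.disjoint_left]
      intro ω h1 h2
      rw [Set.mem_preimage, Set.mem_singleton_iff] at h1 h2
      exact hvw (h1 ▸ h2 ▸ rfl)
  rw [entropy, tsum_fintype]
  have hterm : ∀ a : α, Real.negMulLog ((μ ((f ∘ V) ⁻¹' {a})).toReal)
      = if (univ.filter (fun v => f v = a)).card = k
        then Real.negMulLog ((k : ℝ)/64) else 0 := by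
    intro a
    rw [hmeasure a]
    rcases hcount a with h | h <;> rw [h]
    · rw [if_pos rfl, ENNReal.toReal_div]
      norm_num
    · rw [if_neg (by omega)]
      norm_num [Real.negMulLog]
  rw [Finset.sum_congr rfl (fun a _ => hterm a), ← Finset.sum_filter, Finset.sum_const,
    nsmul_eq_mul]
  set N := (univ.filter (fun a : α => (univ.filter (fun v => f v = a)).card = k)).card with hN
  have h64 : ∑ a : α, (univ.filter (fun v => f v = a)).card = 64 := by
    rw [← Finset.card_eq_sum_card_fiberwise (fun v _ => mem_univ (f v))]
    decide
  have hNk : N * k = 64 := by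
    rw [← h64, ← Finset.sum_filter_add_sum_filter_not univ
      (fun a : α => (univ.filter (fun v => f v = a)).card = k)]
    have h1 : ∑ a ∈ univ.filter (fun a : α => (univ.filter (fun v => f v = a)).card = k),
        (univ.filter (fun v => f v = a)).card = N * k := by
      rw [Finset.sum_congr rfl (fun a ha => (mem_filter.mp ha).2), Finset.sum_const,
        smul_eq_mul]
    have h2 : ∑ a ∈ univ.filter (fun a : α => ¬(univ.filter (fun v => f v = a)).card = k),
        (univ.filter (fun v => f v = a)).card = 0 := by
      apply Finset.sum_eq_zero
      intro a ha
      rcases hcount a with h | h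
      · exact absurd h (mem_filter.mp ha).2
      · exact h
    rw [h1, h2, add_zero]
  have hNk' : (N : ℝ) * (k : ℝ) = 64 := by exact_mod_cast hNk
  have hlog : Real.negMulLog ((k : ℝ)/64) = (k : ℝ)/64 * Real.log (64/(k : ℝ)) := by
    rw [Real.negMulLog, neg_mul_comm, ← Real.log_inv, inv_div]
  rw [hlog]
  have : (N : ℝ) * ((k : ℝ)/64 * Real.log (64/(k : ℝ)))
      = ((N : ℝ) * (k : ℝ))/64 * Real.log (64/(k : ℝ)) := by ring
  rw [this, hNk']
  norm_num

open Finset in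
private lemma count_of_inj' {α : Type*} [Fintype α] [DecidableEq α] {f : B6' → α}
    (hf : Function.Injective f) (a : α) :
    (univ.filter (fun v => f v = a)).card = 1 ∨ (univ.filter (fun v => f v = a)).card = 0 := by
  have : (univ.filter (fun v => f v = a)).card ≤ 1 := by
    apply Finset.card_le_one.mpr
    intro u hu w hw
    exact hf (((mem_filter.mp hu).2).trans ((mem_filter.mp hw).2).symm)
  omega

/-- **Entropy facts for System 1 (used in Lemma 6).** `x1, x2, x4, x5, x7, x8`
are independent uniform bits, `x3 = x1 + x2`, `x6 = x4 + x5`, `x9 = x7 + x8`,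
the sources are `Ŝ1 = (x1,x4,x7)`, `Ŝ2 = (x2,x5,x8)`, `Ŝ3 = (x3,x6,x9)` and the
target is `T̂ = (x1,x5,x9)`. -/
theorem system1_entropy_facts
    {Ω : Type*} [MeasurableSpace Ω] (μ : Measure Ω) [IsProbabilityMeasure μ]
    (x1 x2 x4 x5 x7 x8 : Ω → ZMod 2)
    (hmeas : ∀ f ∈ [x1, x2, x4, x5, x7, x8], Measurable f)
    (hunif : ∀ f ∈ [x1, x2, x4, x5, x7, x8], ∀ a : ZMod 2, μ (f ⁻¹' {a}) = 1/2)
    (hindep : iIndepFun ![x1, x2, x4, x5, x7, x8] μ)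
    (x3 x6 x9 : Ω → ZMod 2)
    (hx3 : x3 = fun ω => x1 ω + x2 ω)
    (hx6 : x6 = fun ω => x4 ω + x5 ω)
    (hx9 : x9 = fun ω => x7 ω + x8 ω)
    (S1 S2 S3 : Ω → ZMod 2 × ZMod 2 × ZMod 2)
    (hS1 : S1 = fun ω => (x1 ω, x4 ω, x7 ω))
    (hS2 : S2 = fun ω => (x2 ω, x5 ω, x8 ω))
    (hS3 : S3 = fun ω => (x3 ω, x6 ω, x9 ω))
    (T : Ω → ZMod 2 × ZMod 2 × ZMod 2)
    (hT : T = fun ω => (x1 ω, x5 ω, x9 ω)) :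
    -- (1) I(T̂ ; (Ŝ1, Ŝ2, Ŝ3)) = H(T̂) = 3 log 2
    mutualInfo μ T (fun ω => (S1 ω, S2 ω, S3 ω)) = entropy μ T
    ∧ entropy μ T = 3 * Real.log 2
    -- (2) I(x1 ; Ŝ2) = 0 and I(x1 ; Ŝ3) = 0
    ∧ mutualInfo μ x1 S2 = 0
    ∧ mutualInfo μ x1 S3 = 0
    -- (3) I(x1 ; Ŝ1) = log 2
    ∧ mutualInfo μ x1 S1 = Real.log 2
    -- (4) H((x1, Ŝ1) | (Ŝ2, Ŝ3)) = 0
    ∧ condEntropy μ (fun ω => (x1 ω, S1 ω)) (fun ω => (S2 ω, S3 ω)) = 0 := by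
  obtain ⟨m1, m2, m4, m5, m7, m8⟩ : Measurable x1 ∧ Measurable x2 ∧ Measurable x4 ∧
      Measurable x5 ∧ Measurable x7 ∧ Measurable x8 :=
    ⟨hmeas _ (by simp), hmeas _ (by simp), hmeas _ (by simp), hmeas _ (by simp),
      hmeas _ (by simp), hmeas _ (by simp)⟩
  set V : Ω → B6' := fun ω => (x1 ω, x2 ω, x4 ω, x5 ω, x7 ω, x8 ω) with hVdef
  have hVm : ∀ v : B6', MeasurableSet (V ⁻¹' {v}) := by
    rintro ⟨a, b, c, d, e, g⟩
    have hs : V ⁻¹' {(a, b, c, d, e, g)} = x1 ⁻¹' {a} ∩ (x2 ⁻¹' {b} ∩ (x4 ⁻¹' {c} ∩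
        (x5 ⁻¹' {d} ∩ (x7 ⁻¹' {e} ∩ x8 ⁻¹' {g})))) := by
      ext ω
      simp [hVdef, Prod.ext_iff]
    rw [hs]
    exact (m1 (measurableSet_singleton _)).inter ((m2 (measurableSet_singleton _)).inter
      ((m4 (measurableSet_singleton _)).inter ((m5 (measurableSet_singleton _)).inter
      ((m7 (measurableSet_singleton _)).inter (m8 (measurableSet_singleton _))))))
  have hV : ∀ v : B6', μ (V ⁻¹' {v}) = 1/64 := by
    rintro ⟨a, b, c, d, e, g⟩
    have hpre := hindep.measure_inter_preimage_eq_mul (S := Finset.univ)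
      (sets := ![{a}, {b}, {c}, {d}, {e}, {g}])
      (fun i _ => by fin_cases i <;> exact measurableSet_singleton _)
    have hset : V ⁻¹' {(a, b, c, d, e, g)} =
        ⋂ i ∈ Finset.univ, (![x1, x2, x4, x5, x7, x8] i) ⁻¹' (![{a}, {b}, {c}, {d}, {e}, {g}] i) := by
      ext ω
      simp only [Set.mem_preimage, Set.mem_singleton_iff, hVdef, Prod.mk.injEq,
        Set.mem_iInter, Finset.mem_univ, true_implies]
      constructor
      · rintro ⟨h1, h2, h3, h4, h5, h6⟩ i
        fin_cases i <;> simpa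
      · intro h
        exact ⟨by simpa using h 0, by simpa using h 1, by simpa using h 2,
          by simpa using h 3, by simpa using h 4, by simpa using h 5⟩
    rw [hset, hpre, Fin.prod_univ_six]
    show μ (x1 ⁻¹' {a}) * μ (x2 ⁻¹' {b}) * μ (x4 ⁻¹' {c}) * μ (x5 ⁻¹' {d}) *
      μ (x7 ⁻¹' {e}) * μ (x8 ⁻¹' {g}) = 1/64
    rw [hunif x1 (by simp), hunif x2 (by simp), hunif x4 (by simp), hunif x5 (by simp),
      hunif x7 (by simp), hunif x8 (by simp)]
    rw [show (1/2:ENNReal) = ((1/2 : NNReal) : ENNReal) by simp [ENNReal.coe_div]]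
    rw [← ENNReal.coe_mul, ← ENNReal.coe_mul, ← ENNReal.coe_mul, ← ENNReal.coe_mul,
      ← ENNReal.coe_mul]
    rw [show ((1:NNReal)/2)*(1/2)*(1/2)*(1/2)*(1/2)*(1/2) = 1/64 by
      rw [div_mul_div_comm, div_mul_div_comm, div_mul_div_comm, div_mul_div_comm,
        div_mul_div_comm]; norm_num]
    simp [ENNReal.coe_div]
  -- log conversions
  have L1 : Real.log (64:ℝ) = 6 * Real.log 2 := by
    rw [show (64:ℝ) = 2^6 by norm_num, Real.log_pow]; norm_num
  have L8 : Real.log (8:ℝ) = 3 * Real.log 2 := by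
    rw [show (8:ℝ) = 2^3 by norm_num, Real.log_pow]; norm_num
  have L4 : Real.log (16:ℝ) = 4 * Real.log 2 := by
    rw [show (16:ℝ) = 2^4 by norm_num, Real.log_pow]; norm_num
  -- entropies
  have hT' : entropy μ T = 3 * Real.log 2 := by
    rw [show T = (fun v : B6' => (v.1, v.2.2.2.1, v.2.2.2.2.1 + v.2.2.2.2.2)) ∘ V from
      funext fun ω => by simp [hT, hx9, hVdef]]
    rw [entropy_comp' μ V hVm hV _ 8 (by norm_num) (by decide)]
    norm_num [L8]
  have hS123 : entropy μ (fun ω => (S1 ω, S2 ω, S3 ω)) = 6 * Real.log 2 := by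
    rw [show (fun ω => (S1 ω, S2 ω, S3 ω)) = (fun v : B6' =>
        ((v.1, v.2.2.1, v.2.2.2.2.1), (v.2.1, v.2.2.2.1, v.2.2.2.2.2),
          (v.1 + v.2.1, v.2.2.1 + v.2.2.2.1, v.2.2.2.2.1 + v.2.2.2.2.2))) ∘ V from
      funext fun ω => by simp [hS1, hS2, hS3, hx3, hx6, hx9, hVdef]]
    rw [entropy_comp' μ V hVm hV _ 1 (by norm_num)
      (count_of_inj' (by
        rintro ⟨a1, a2, a3, a4, a5, a6⟩ ⟨b1, b2, b3, b4, b5, b6⟩ h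
        simp only [Prod.mk.injEq] at h
        simp_all))]
    norm_num [L1]
  have hTS : entropy μ (fun ω => (T ω, (S1 ω, S2 ω, S3 ω))) = 6 * Real.log 2 := by
    rw [show (fun ω => (T ω, (S1 ω, S2 ω, S3 ω))) = (fun v : B6' =>
        ((v.1, v.2.2.2.1, v.2.2.2.2.1 + v.2.2.2.2.2),
          ((v.1, v.2.2.1, v.2.2.2.2.1), (v.2.1, v.2.2.2.1, v.2.2.2.2.2),
          (v.1 + v.2.1, v.2.2.1 + v.2.2.2.1, v.2.2.2.2.1 + v.2.2.2.2.2)))) ∘ V from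
      funext fun ω => by simp [hT, hS1, hS2, hS3, hx3, hx6, hx9, hVdef]]
    rw [entropy_comp' μ V hVm hV _ 1 (by norm_num)
      (count_of_inj' (by
        rintro ⟨a1, a2, a3, a4, a5, a6⟩ ⟨b1, b2, b3, b4, b5, b6⟩ h
        simp only [Prod.mk.injEq] at h
        simp_all))]
    norm_num [L1]
  have hx1' : entropy μ x1 = Real.log 2 := by
    rw [show x1 = (fun v : B6' => v.1) ∘ V from funext fun ω => by simp [hVdef]]
    rw [entropy_comp' μ V hVm hV _ 32 (by norm_num) (by decide)]
    norm_num
  have hS2' : entropy μ S2 = 3 * Real.log 2 := by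
    rw [show S2 = (fun v : B6' => (v.2.1, v.2.2.2.1, v.2.2.2.2.2)) ∘ V from
      funext fun ω => by simp [hS2, hVdef]]
    rw [entropy_comp' μ V hVm hV _ 8 (by norm_num) (by decide)]
    norm_num [L8]
  have hx1S2 : entropy μ (fun ω => (x1 ω, S2 ω)) = 4 * Real.log 2 := by
    rw [show (fun ω => (x1 ω, S2 ω)) = (fun v : B6' =>
        (v.1, (v.2.1, v.2.2.2.1, v.2.2.2.2.2))) ∘ V from
      funext fun ω => by simp [hS2, hVdef]]
    rw [entropy_comp' μ V hVm hV _ 4 (by norm_num) (by decide)]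
    norm_num [L4]
  have hS3' : entropy μ S3 = 3 * Real.log 2 := by
    rw [show S3 = (fun v : B6' =>
        (v.1 + v.2.1, v.2.2.1 + v.2.2.2.1, v.2.2.2.2.1 + v.2.2.2.2.2)) ∘ V from
      funext fun ω => by simp [hS3, hx3, hx6, hx9, hVdef]]
    rw [entropy_comp' μ V hVm hV _ 8 (by norm_num) (by decide)]
    norm_num [L8]
  have hx1S3 : entropy μ (fun ω => (x1 ω, S3 ω)) = 4 * Real.log 2 := by
    rw [show (fun ω => (x1 ω, S3 ω)) = (fun v : B6' =>
        (v.1, (v.1 + v.2.1, v.2.2.1 + v.2.2.2.1, v.2.2.2.2.1 + v.2.2.2.2.2))) ∘ V from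
      funext fun ω => by simp [hS3, hx3, hx6, hx9, hVdef]]
    rw [entropy_comp' μ V hVm hV _ 4 (by norm_num) (by decide)]
    norm_num [L4]
  have hS1' : entropy μ S1 = 3 * Real.log 2 := by
    rw [show S1 = (fun v : B6' => (v.1, v.2.2.1, v.2.2.2.2.1)) ∘ V from
      funext fun ω => by simp [hS1, hVdef]]
    rw [entropy_comp' μ V hVm hV _ 8 (by norm_num) (by decide)]
    norm_num [L8]
  have hx1S1 : entropy μ (fun ω => (x1 ω, S1 ω)) = 3 * Real.log 2 := by
    rw [show (fun ω => (x1 ω, S1 ω)) = (fun v : B6' =>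
        (v.1, (v.1, v.2.2.1, v.2.2.2.2.1))) ∘ V from
      funext fun ω => by simp [hS1, hVdef]]
    rw [entropy_comp' μ V hVm hV _ 8 (by norm_num) (by decide)]
    norm_num [L8]
  have hS23 : entropy μ (fun ω => (S2 ω, S3 ω)) = 6 * Real.log 2 := by
    rw [show (fun ω => (S2 ω, S3 ω)) = (fun v : B6' =>
        ((v.2.1, v.2.2.2.1, v.2.2.2.2.2),
          (v.1 + v.2.1, v.2.2.1 + v.2.2.2.1, v.2.2.2.2.1 + v.2.2.2.2.2))) ∘ V from
      funext fun ω => by simp [hS2, hS3, hx3, hx6, hx9, hVdef]]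
    rw [entropy_comp' μ V hVm hV _ 1 (by norm_num)
      (count_of_inj' (by
        rintro ⟨a1, a2, a3, a4, a5, a6⟩ ⟨b1, b2, b3, b4, b5, b6⟩ h
        simp only [Prod.mk.injEq] at h
        obtain ⟨⟨h2, h4, h6⟩, g1, g3, g5⟩ := h
        subst h2; subst h4; subst h6
        simp only [Prod.mk.injEq]
        exact ⟨add_right_cancel g1, trivial, add_right_cancel g3, trivial, add_right_cancel g5, trivial⟩))]
    norm_num [L1]
  have hfull : entropy μ (fun ω => ((x1 ω, S1 ω), (S2 ω, S3 ω))) = 6 * Real.log 2 := by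
    rw [show (fun ω => ((x1 ω, S1 ω), (S2 ω, S3 ω))) = (fun v : B6' =>
        ((v.1, (v.1, v.2.2.1, v.2.2.2.2.1)),
          ((v.2.1, v.2.2.2.1, v.2.2.2.2.2),
          (v.1 + v.2.1, v.2.2.1 + v.2.2.2.1, v.2.2.2.2.1 + v.2.2.2.2.2)))) ∘ V from
      funext fun ω => by simp [hS1, hS2, hS3, hx3, hx6, hx9, hVdef]]
    rw [entropy_comp' μ V hVm hV _ 1 (by norm_num)
      (count_of_inj' (by
        rintro ⟨a1, a2, a3, a4, a5, a6⟩ ⟨b1, b2, b3, b4, b5, b6⟩ h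
        simp only [Prod.mk.injEq] at h
        simp_all))]
    norm_num [L1]
  refine ⟨?_, hT', ?_, ?_, ?_, ?_⟩
  · simp only [mutualInfo]
    rw [hT', hS123, hTS]
    ring
  · simp only [mutualInfo]
    rw [hx1', hS2', hx1S2]
    ring
  · simp only [mutualInfo]
    rw [hx1', hS3', hx1S3]
    ring
  · simp only [mutualInfo]
    rw [hx1', hS1', hx1S1]
    ring
  · simp only [condEntropy]
    rw [hS23, hfull]
    ring
end

section
/- Identity of atoms across the two systems (Lemma 6(i)): Let π̂1, π̂2, π̂3 : A({1,2,3}) → ℝ satisfy the sub-target-t atom constraints for t = 1, 2, 3 respectively, and set π̂ = π̂1 + π̂2 + π̂3 (additivity over the three independent sub-targets of T̂). Let π̄ : A({1,2,3}) → ℝ satisfy the System-2 atom constraints. Then π̂(β) = π̄(β) for every β in the eleven-element set F = { {1}{2}{3}; {1}{2}, {1}{3}, {2}{3}; {1}{23}, {2}{13}, {3}{12}; {1}, {2}, {3}; {123} }; specifically, π̂({i}{jk}) = π̄({i}{jk}) = Real.log 2 for all distinct i, j, k, and both π̂ and π̄ vanish on all other elements of F. -/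
/-- The System-2 atom constraints on `π : A({1,2,3}) → ℝ` (instances, for the
XOR system with target `T̄ = (X1,X2,X3)`, of PID nonnegativity, the
independent-identity property, self-redundancy, the two-source decompositions
of `I(X_i;T̄)`, cross-scale subsystem consistency and null atoms). -/
def System2Constraints (π : Finset (Finset ℕ) → ℝ) : Prop :=
  -- (a) nonnegativity
  (∀ β ∈ AC3, 0 ≤ π β)
  -- (b) π({1}{2}{3}) + π({i}{j}) = 0
  ∧ (∀ i ∈ N3, ∀ j ∈ N3, i ≠ j → π {{1}, {2}, {3}} + π {{i}, {j}} = 0)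
  -- (c) decomposition of I(X_i ; T̄) = log 2
  ∧ (∀ i ∈ N3, ∀ j ∈ N3, ∀ k ∈ N3, i ≠ j → i ≠ k → j ≠ k →
      π {{1}, {2}, {3}} + π {{i}, {j}} + π {{i}, {k}} + π {{i}, {j, k}} + π {{i}}
        = Real.log 2)
  -- (d) null atoms
  ∧ (∀ i ∈ N3, ∀ j ∈ N3, ∀ k ∈ N3, i ≠ j → i ≠ k → j ≠ k →
      π {{i}} = 0 ∧ π {{i, j}} = 0 ∧ π {{i, k}} = 0 ∧ π {{1, 2, 3}} = 0
        ∧ π {{i, j}, {i, k}} = 0)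

/-- `c_t(i) = log 2` if `i = t` and `c_t(i) = 0` otherwise: the mutual
information between the `t`-th sub-target of System 1 and the source `Ŝ_i`. -/
noncomputable def cSub (t i : ℕ) : ℝ := if i = t then Real.log 2 else 0

/-- The sub-target-`t` atom constraints on `π : A({1,2,3}) → ℝ`. -/
def SubTargetConstraints (t : ℕ) (π : Finset (Finset ℕ) → ℝ) : Prop :=
  -- (a) nonnegativity
  (∀ β ∈ AC3, 0 ≤ π β)
  -- (b) monotonicity and cross-scale consistency
  ∧ (∀ i ∈ N3, ∀ j ∈ N3, i ≠ j →
      π {{1}, {2}, {3}} + π {{i}, {j}} ≤ min (cSub t i) (cSub t j))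
  -- (c) decomposition of I over the three-source lattice
  ∧ (∀ i ∈ N3, ∀ j ∈ N3, ∀ k ∈ N3, i ≠ j → i ≠ k → j ≠ k →
      π {{1}, {2}, {3}} + π {{i}, {j}} + π {{i}, {k}} + π {{i}, {j, k}} + π {{i}}
        = cSub t i)
  -- (d) null atoms, where {j,k} = {1,2,3} \ {t}
  ∧ (∀ j ∈ N3, ∀ k ∈ N3, j ≠ k → j ≠ t → k ≠ t →
      π {{t}} = 0 ∧ π {{t, j}} = 0 ∧ π {{t, k}} = 0 ∧ π {{1, 2, 3}} = 0
        ∧ π {{t, j}, {t, k}} = 0)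

/-- The eleven-element set `F` of antichains on which the two systems' atoms
are compared. -/
def Fatoms : Finset (Finset (Finset ℕ)) :=
  {{{1}, {2}, {3}},
   {{1}, {2}}, {{1}, {3}}, {{2}, {3}},
   {{1}, {2, 3}}, {{2}, {1, 3}}, {{3}, {1, 2}},
   {{1}}, {{2}}, {{3}},
   {{1, 2, 3}}}

lemma min_cSub_nonpos {t i j : ℕ} (hij : i ≠ j) : min (cSub t i) (cSub t j) ≤ 0 := by
  rcases eq_or_ne i t with rfl | hi
  · have hj : cSub i j = 0 := by simp [cSub, (Ne.symm hij)]
    exact le_trans (min_le_right _ _) (le_of_eq hj)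
  · exact le_trans (min_le_left _ _) (le_of_eq (by simp [cSub, hi]))

lemma exjk : ∀ i ∈ N3, ∃ j ∈ N3, ∃ k ∈ N3, i ≠ j ∧ i ≠ k ∧ j ≠ k := by decide

lemma memP : ∀ i ∈ N3, ∀ j ∈ N3, i ≠ j → ({{i},{j}} : Finset (Finset ℕ)) ∈ AC3 := by decide
lemma memS : ∀ i ∈ N3, ∀ j ∈ N3, ∀ k ∈ N3, i ≠ j → i ≠ k → j ≠ k →
    ({{i},{j,k}} : Finset (Finset ℕ)) ∈ AC3 := by decide
lemma mem1el : ∀ i ∈ N3, ({{i}} : Finset (Finset ℕ)) ∈ AC3 := by decide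
lemma memTr : ({{1},{2},{3}} : Finset (Finset ℕ)) ∈ AC3 := by decide

lemma sub_facts (t : ℕ) (ht : t ∈ N3) (π : Finset (Finset ℕ) → ℝ)
    (h : SubTargetConstraints t π) :
    π {{1},{2},{3}} = 0
    ∧ (∀ i ∈ N3, ∀ j ∈ N3, i ≠ j → π {{i},{j}} = 0)
    ∧ (∀ i ∈ N3, π {{i}} = 0)
    ∧ π {{1,2,3}} = 0
    ∧ (∀ i ∈ N3, ∀ j ∈ N3, ∀ k ∈ N3, i ≠ j → i ≠ k → j ≠ k →
        π {{i},{j,k}} = cSub t i) := by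
  obtain ⟨ha, hb, hc, hd⟩ := h
  have n123 : 0 ≤ π {{1},{2},{3}} := ha _ memTr
  have pair0 : ∀ i ∈ N3, ∀ j ∈ N3, i ≠ j → π {{i},{j}} = 0 := by
    intro i hi j hj hij
    have hle := hb i hi j hj hij
    have hm := min_cSub_nonpos (t := t) hij
    have nn := ha _ (memP i hi j hj hij)
    linarith
  have triple0 : π {{1},{2},{3}} = 0 := by
    have hle := hb 1 (by decide) 2 (by decide) (by decide)
    have hm := min_cSub_nonpos (t := t) (i := 1) (j := 2) (by decide)
    have nn := ha _ (memP 1 (by decide) 2 (by decide) (by decide))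
    linarith
  have key : ∀ i ∈ N3, ∀ j ∈ N3, ∀ k ∈ N3, i ≠ j → i ≠ k → j ≠ k →
      π {{i},{j,k}} + π {{i}} = cSub t i := by
    intro i hi j hj k hk hij hik hjk
    have hce := hc i hi j hj k hk hij hik hjk
    have p1 := pair0 i hi j hj hij
    have p2 := pair0 i hi k hk hik
    linarith
  have hdt : π {{t}} = 0 ∧ π {{1,2,3}} = 0 := by
    obtain ⟨j, hj, k, hk, htj, htk, hjk⟩ := exjk t ht
    obtain ⟨a, _, _, d, _⟩ := hd j hj k hk hjk (Ne.symm htj) (Ne.symm htk)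
    exact ⟨a, d⟩
  have single0 : ∀ i ∈ N3, π {{i}} = 0 := by
    intro i hi
    rcases eq_or_ne i t with rfl | hne
    · exact hdt.1
    · obtain ⟨j, hj, k, hk, hij, hik, hjk⟩ := exjk i hi
      have hk2 := key i hi j hj k hk hij hik hjk
      have hcs : cSub t i = 0 := by simp [cSub, hne]
      have nn1 := ha _ (memS i hi j hj k hk hij hik hjk)
      have nn2 := ha _ (mem1el i hi)
      linarith
  refine ⟨triple0, pair0, single0, hdt.2, ?_⟩
  intro i hi j hj k hk hij hik hjk
  have hk2 := key i hi j hj k hk hij hik hjk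
  have := single0 i hi
  linarith

lemma bar_facts (π : Finset (Finset ℕ) → ℝ) (h : System2Constraints π) :
    π {{1},{2},{3}} = 0
    ∧ (∀ i ∈ N3, ∀ j ∈ N3, i ≠ j → π {{i},{j}} = 0)
    ∧ (∀ i ∈ N3, π {{i}} = 0)
    ∧ π {{1,2,3}} = 0
    ∧ (∀ i ∈ N3, ∀ j ∈ N3, ∀ k ∈ N3, i ≠ j → i ≠ k → j ≠ k →
        π {{i},{j,k}} = Real.log 2) := by
  obtain ⟨ha, hb, hc, hd⟩ := h
  have n123 : 0 ≤ π {{1},{2},{3}} := ha _ memTr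
  have pair0 : ∀ i ∈ N3, ∀ j ∈ N3, i ≠ j → π {{i},{j}} = 0 := by
    intro i hi j hj hij
    have he := hb i hi j hj hij
    have nn := ha _ (memP i hi j hj hij)
    linarith
  have triple0 : π {{1},{2},{3}} = 0 := by
    have he := hb 1 (by decide) 2 (by decide) (by decide)
    have nn := ha _ (memP 1 (by decide) 2 (by decide) (by decide))
    linarith
  have single0 : ∀ i ∈ N3, π {{i}} = 0 := by
    intro i hi
    obtain ⟨j, hj, k, hk, hij, hik, hjk⟩ := exjk i hi
    exact (hd i hi j hj k hk hij hik hjk).1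
  have top0 : π {{1,2,3}} = 0 :=
    (hd 1 (by decide) 2 (by decide) 3 (by decide) (by decide) (by decide)
      (by decide)).2.2.2.1
  refine ⟨triple0, pair0, single0, top0, ?_⟩
  intro i hi j hj k hk hij hik hjk
  have hce := hc i hi j hj k hk hij hik hjk
  have p1 := pair0 i hi j hj hij
  have p2 := pair0 i hi k hk hik
  have s0 := single0 i hi
  linarith

/-- **Identity of atoms across the two systems (Lemma 6(i)).** If `π̂t`
satisfies the sub-target-`t` atom constraints for `t = 1, 2, 3`,
`π̂ = π̂1 + π̂2 + π̂3`, and `π̄` satisfies the System-2 atom constraints, then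
`π̂` and `π̄` agree on `F`; specifically both equal `log 2` on the three
synergy-type atoms `{i}{jk}` and both vanish on all other elements of `F`. -/
theorem atoms_identical_across_systems
    (π1 π2 π3 : Finset (Finset ℕ) → ℝ)
    (h1 : SubTargetConstraints 1 π1) (h2 : SubTargetConstraints 2 π2)
    (h3 : SubTargetConstraints 3 π3)
    (πhat : Finset (Finset ℕ) → ℝ)
    (hhat : πhat = fun β => π1 β + π2 β + π3 β)
    (πbar : Finset (Finset ℕ) → ℝ) (hbar : System2Constraints πbar) :
    (∀ β ∈ Fatoms, πhat β = πbar β)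
    ∧ (∀ i ∈ N3, ∀ j ∈ N3, ∀ k ∈ N3, i ≠ j → i ≠ k → j ≠ k →
        πhat {{i}, {j, k}} = Real.log 2 ∧ πbar {{i}, {j, k}} = Real.log 2)
    ∧ (∀ β ∈ Fatoms \
          ({{{1}, {2, 3}}, {{2}, {1, 3}}, {{3}, {1, 2}}} :
            Finset (Finset (Finset ℕ))),
        πhat β = 0 ∧ πbar β = 0) := by
  subst hhat
  obtain ⟨t1, p1z, s1z, top1, syn1⟩ := sub_facts 1 (by decide) π1 h1
  obtain ⟨t2, p2z, s2z, top2, syn2⟩ := sub_facts 2 (by decide) π2 h2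
  obtain ⟨t3, p3z, s3z, top3, syn3⟩ := sub_facts 3 (by decide) π3 h3
  obtain ⟨tb, pbz, sbz, topb, synb⟩ := bar_facts πbar hbar
  have part2 : ∀ i ∈ N3, ∀ j ∈ N3, ∀ k ∈ N3, i ≠ j → i ≠ k → j ≠ k →
      (π1 {{i},{j,k}} + π2 {{i},{j,k}} + π3 {{i},{j,k}} = Real.log 2)
      ∧ πbar {{i},{j,k}} = Real.log 2 := by
    intro i hi j hj k hk hij hik hjk
    refine ⟨?_, synb i hi j hj k hk hij hik hjk⟩
    rw [syn1 i hi j hj k hk hij hik hjk, syn2 i hi j hj k hk hij hik hjk,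
      syn3 i hi j hj k hk hij hik hjk]
    fin_cases hi <;> simp [cSub]
  have hpair : ∀ i ∈ N3, ∀ j ∈ N3, i ≠ j →
      (π1 {{i},{j}} + π2 {{i},{j}} + π3 {{i},{j}} = 0) ∧ πbar {{i},{j}} = 0 :=
    fun i hi j hj hij =>
      ⟨by rw [p1z i hi j hj hij, p2z i hi j hj hij, p3z i hi j hj hij]; ring,
        pbz i hi j hj hij⟩
  have hsingle : ∀ i ∈ N3,
      (π1 {{i}} + π2 {{i}} + π3 {{i}} = 0) ∧ πbar {{i}} = 0 :=
    fun i hi => ⟨by rw [s1z i hi, s2z i hi, s3z i hi]; ring, sbz i hi⟩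
  have part3 : ∀ β ∈ Fatoms \
        ({{{1}, {2, 3}}, {{2}, {1, 3}}, {{3}, {1, 2}}} :
          Finset (Finset (Finset ℕ))),
      (π1 β + π2 β + π3 β = 0) ∧ πbar β = 0 := by
    intro β hβ
    rw [Finset.mem_sdiff] at hβ
    obtain ⟨hF, hns⟩ := hβ
    fin_cases hF <;>
      first
      | exact absurd (by decide) hns
      | exact ⟨by rw [t1, t2, t3]; ring, tb⟩
      | exact ⟨by rw [top1, top2, top3]; ring, topb⟩
      | exact hpair 1 (by decide) 2 (by decide) (by decide)
      | exact hpair 1 (by decide) 3 (by decide) (by decide)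
      | exact hpair 2 (by decide) 3 (by decide) (by decide)
      | exact hsingle 1 (by decide)
      | exact hsingle 2 (by decide)
      | exact hsingle 3 (by decide)
  have part1 : ∀ β ∈ Fatoms,
      (π1 β + π2 β + π3 β) = πbar β := by
    intro β hβ
    fin_cases hβ <;>
      first
      | exact (part3 _ (by decide)).1.trans (part3 _ (by decide)).2.symm
      | exact (part2 1 (by decide) 2 (by decide) 3 (by decide) (by decide)
          (by decide) (by decide)).1.trans
          (part2 1 (by decide) 2 (by decide) 3 (by decide) (by decide)
          (by decide) (by decide)).2.symm
      | exact (part2 2 (by decide) 1 (by decide) 3 (by decide) (by decide)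
          (by decide) (by decide)).1.trans
          (part2 2 (by decide) 1 (by decide) 3 (by decide) (by decide)
          (by decide) (by decide)).2.symm
      | exact (part2 3 (by decide) 1 (by decide) 2 (by decide) (by decide)
          (by decide) (by decide)).1.trans
          (part2 3 (by decide) 1 (by decide) 2 (by decide) (by decide)
          (by decide) (by decide)).2.symm
  exact ⟨part1, part2, part3⟩
end

section
/- Subsystem inconsistency in lattice-based PID (Theorem 1, concrete form): There is no subset O ⊆ A({1,2,3}) of the three-source antichain lattice such that both of the following hold: (i) for every π̂ of the form π̂1 + π̂2 + π̂3, where π̂t satisfies the sub-target-t atom constraints for t = 1, 2, 3, one has Σ_{β ∈ O} π̂(β) = 3·Real.log 2 (which equals I((Ŝ1,Ŝ2,Ŝ3) ; T̂) for System 1); and (ii) for every π̄ satisfying the System-2 atom constraints one has Σ_{β ∈ O} π̄(β) = 2·Real.log 2 (which equals I((X1,X2,X3) ; T̄) for System 2). Equivalently, for every subset O ⊆ A({1,2,3}) there exists either a π̂ as in (i) with Σ_{β ∈ O} π̂(β) ≠ 3·Real.log 2, or a π̄ as in (ii) with Σ_{β ∈ O} π̄(β) ≠ 2·Real.log 2.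 -/
noncomputable def pHat1 : Finset (Finset ℕ) → ℝ := fun β =>
  if β = {{1},{2,3}} then Real.log 2 else 0
noncomputable def pHat2 : Finset (Finset ℕ) → ℝ := fun β =>
  if β = {{2},{1,3}} then Real.log 2 else 0
noncomputable def pHat3 : Finset (Finset ℕ) → ℝ := fun β =>
  if β = {{3},{1,2}} then Real.log 2 else 0

lemma pHat1_sub : SubTargetConstraints 1 pHat1 := by
  refine ⟨?_, ?_, ?_, ?_⟩
  · intro β _
    simp only [pHat1]; split_ifs
    · exact Real.log_nonneg one_le_two
    · exact le_rfl
  · intro i hi j hj hij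
    fin_cases hi <;> fin_cases hj <;>
      simp (config := { decide := true }) [pHat1, cSub] <;> positivity
  · intro i hi j hj k hk hij hik hjk
    fin_cases hi <;> fin_cases hj <;> fin_cases hk <;>
      simp (config := { decide := true }) [pHat1, cSub] <;> simp_all
  · intro j hj k hk hjk hjt hkt
    fin_cases hj <;> fin_cases hk <;>
      simp (config := { decide := true }) [pHat1]

lemma pHat2_sub : SubTargetConstraints 2 pHat2 := by
  refine ⟨?_, ?_, ?_, ?_⟩
  · intro β _
    simp only [pHat2]; split_ifs
    · exact Real.log_nonneg one_le_two
    · exact le_rfl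
  · intro i hi j hj hij
    fin_cases hi <;> fin_cases hj <;>
      simp (config := { decide := true }) [pHat2, cSub] <;> positivity
  · intro i hi j hj k hk hij hik hjk
    fin_cases hi <;> fin_cases hj <;> fin_cases hk <;>
      simp (config := { decide := true }) [pHat2, cSub] <;> simp_all
  · intro j hj k hk hjk hjt hkt
    fin_cases hj <;> fin_cases hk <;>
      simp (config := { decide := true }) [pHat2]

lemma pHat3_sub : SubTargetConstraints 3 pHat3 := by
  refine ⟨?_, ?_, ?_, ?_⟩
  · intro β _
    simp only [pHat3]; split_ifs
    · exact Real.log_nonneg one_le_two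
    · exact le_rfl
  · intro i hi j hj hij
    fin_cases hi <;> fin_cases hj <;>
      simp (config := { decide := true }) [pHat3, cSub] <;> positivity
  · intro i hi j hj k hk hij hik hjk
    fin_cases hi <;> fin_cases hj <;> fin_cases hk <;>
      simp (config := { decide := true }) [pHat3, cSub] <;> simp_all
  · intro j hj k hk hjk hjt hkt
    fin_cases hj <;> fin_cases hk <;>
      simp (config := { decide := true }) [pHat3]

noncomputable def pBar : Finset (Finset ℕ) → ℝ := fun β =>
  pHat1 β + pHat2 β + pHat3 β

lemma pBar_sys2 : System2Constraints pBar := by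
  refine ⟨?_, ?_, ?_, ?_⟩
  · intro β _
    simp only [pBar, pHat1, pHat2, pHat3]
    split_ifs <;> first | positivity | norm_num
  · intro i hi j hj hij
    fin_cases hi <;> fin_cases hj <;>
      simp (config := { decide := true }) [pBar, pHat1, pHat2, pHat3] <;> simp_all
  · intro i hi j hj k hk hij hik hjk
    fin_cases hi <;> fin_cases hj <;> fin_cases hk <;>
      simp (config := { decide := true }) [pBar, pHat1, pHat2, pHat3] <;> simp_all
  · intro i hi j hj k hk hij hik hjk
    fin_cases hi <;> fin_cases hj <;> fin_cases hk <;>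
      simp (config := { decide := true }) [pBar, pHat1, pHat2, pHat3] <;> simp_all

/-- **Subsystem inconsistency in lattice-based PID (Theorem 1, concrete
form).** There is no subset `O ⊆ A({1,2,3})` such that simultaneously (i) every
`π̂ = π̂1 + π̂2 + π̂3` with `π̂t` satisfying the sub-target-`t` atom constraints
sums over `O` to `3 log 2` (which equals `I((Ŝ1,Ŝ2,Ŝ3); T̂)` for System 1), and
(ii) every `π̄` satisfying the System-2 atom constraints sums over `O` to
`2 log 2` (which equals `I((X1,X2,X3); T̄)` for System 2). -/
theorem subsystem_inconsistency_lattice_pid :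
    ∀ O : Finset (Finset (Finset ℕ)), O ⊆ AC3 →
      ¬ ((∀ π1 π2 π3 : Finset (Finset ℕ) → ℝ,
            SubTargetConstraints 1 π1 → SubTargetConstraints 2 π2 →
            SubTargetConstraints 3 π3 →
            ∑ β ∈ O, (π1 β + π2 β + π3 β) = 3 * Real.log 2)
        ∧ (∀ π : Finset (Finset ℕ) → ℝ, System2Constraints π →
            ∑ β ∈ O, π β = 2 * Real.log 2)) := by
  intro O _ ⟨h1, h2⟩
  have e1 := h1 pHat1 pHat2 pHat3 pHat1_sub pHat2_sub pHat3_sub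
  have e2 := h2 pBar pBar_sys2
  have : (3 : ℝ) * Real.log 2 = 2 * Real.log 2 := by
    rw [← e1, ← e2]; rfl
  have hpos : 0 < Real.log 2 := Real.log_pos one_lt_two
  linarith
end
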